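/- For every real x, the function ρ(x) := (1 + q(x))/(1 - q(x)) satisfies ρ(x) ≤ max(3, 2x), where q is defined by q(x) = (x - 2 + e^{-x}(x+2)) / (x(1 - e^{-x}(x+1))) for x ≠ 0 and q(0) = 1/3. -/

import Mathlib

/-- The function `q` from the paper. -/
noncomputable def q (x : ℝ) : ℝ :=
  if x = 0 then 1/3
  else (x - 2 + Real.exp (-x) * (x + 2)) / (x * (1 - Real.exp (-x) * (x + 1)))

/-- The function `ρ = (1 + q)/(1 - q)`. -/
noncomputable def rho (x : ℝ) : ℝ := (1 + q x) / (1 - q x)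

/-- Quartic Taylor lower bound for `exp` on nonnegative reals. -/
lemma exp_ge_quartic {y : ℝ} (hy : 0 ≤ y) :
    1 + y + y ^ 2 / 2 + y ^ 3 / 6 + y ^ 4 / 24 ≤ Real.exp y := by
  have h := Real.sum_le_exp_of_nonneg hy 5
  simp [Finset.sum_range_succ] at h
  norm_num [Nat.factorial] at h
  linarith

set_option maxHeartbeats 1600000 in
theorem rho_le (x : ℝ) : rho x ≤ max 3 (2 * x) := by
  rcases eq_or_ne x 0 with h0 | h0
  · subst h0
    have : rho 0 = 2 := by
      unfold rho q; norm_num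
    rw [this]
    have : (2:ℝ) ≤ 3 := by norm_num
    exact this.trans (le_max_left _ _)
  -- Notation
  set t := Real.exp (-x) with ht_def
  set E := Real.exp x with hE_def
  have ht0 : 0 < t := Real.exp_pos _
  have hE0 : 0 < E := Real.exp_pos _
  have hEt : E * t = 1 := by
    rw [hE_def, ht_def, ← Real.exp_add]; simp
  set N : ℝ := x - 2 + t * (x + 2) with hN_def
  set d : ℝ := x * (1 - t * (x + 1)) with hd_def
  have hq : q x = N / d := by unfold q; rw [if_neg h0]
  -- 1 - t(x+1) > 0 for x ≠ 0
  have hM : 0 < 1 - t * (x + 1) := by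
    have h1 := Real.add_one_lt_exp h0
    nlinarith [mul_lt_mul_of_pos_left h1 ht0]
  -- quartic bounds for E and t
  rcases lt_or_gt_of_ne h0 with hxneg | hxpos
  · -- x < 0 case : show rho x ≤ 3
    have hT : 1 - x + x ^ 2 / 2 - x ^ 3 / 6 + x ^ 4 / 24 ≤ t := by
      have := exp_ge_quartic (y := -x) (by linarith)
      rw [← ht_def] at this
      nlinarith [this]
    have hd0 : d < 0 := by
      rw [hd_def]
      exact mul_neg_of_neg_of_pos hxneg hM
    -- d - N = 2 - t*(x^2+2x+2) < 0
    have hdN : d - N < 0 := by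
      have h1 : d - N = 2 - t * (x ^ 2 + 2 * x + 2) := by
        rw [hd_def, hN_def]; ring
      rw [h1]
      nlinarith [mul_nonneg (sub_nonneg.2 hT)
          (by nlinarith [sq_nonneg x, sq_nonneg (x+1)] : (0:ℝ) ≤ x ^ 2 + 2 * x + 2),
        hxneg, sq_nonneg (x^2), sq_nonneg x]
    have h1q : 0 < 1 - q x := by
      rw [hq]
      have : 1 - N / d = (d - N) / d := by rw [sub_div, div_self hd0.ne]
      rw [this]
      exact div_pos_of_neg_of_neg hdN hd0
    have key : 1 + q x ≤ 3 * (1 - q x) := by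
      rw [hq]
      have e1 : 1 + N / d = (d + N) / d := by rw [add_div d N d, div_self hd0.ne]
      have e2 : 1 - N / d = (d - N) / d := by rw [sub_div, div_self hd0.ne]
      rw [e1, e2, ← sub_nonneg]
      have e3 : 3 * ((d - N) / d) - (d + N) / d = (3 * (d - N) - (d + N)) / d := by
        ring
      rw [e3]
      apply div_nonneg_of_nonpos _ hd0.le
      have h2 : (d + N) - 3 * (d - N) = 2 * (t * (x ^ 2 + 3 * x + 4) - (4 - x)) := by
        rw [hd_def, hN_def]; ring
      -- t*(x^2+3x+4) ≥ 4 - x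
      nlinarith [mul_nonneg (sub_nonneg.2 hT)
          (by nlinarith [sq_nonneg (x + 2)] : (0:ℝ) ≤ x ^ 2 + 3 * x + 4),
        hxneg, mul_nonneg (mul_nonneg (sq_nonneg x) (sq_nonneg x)) (sq_nonneg x),
        sq_nonneg (x^2 - x), sq_nonneg (x^3)]
    have : rho x ≤ 3 := by
      rw [rho, div_le_iff₀ h1q]; linarith
    exact this.trans (le_max_left _ _)
  · -- x > 0 case
    have hT : 1 + x + x ^ 2 / 2 + x ^ 3 / 6 + x ^ 4 / 24 ≤ E := by
      have := exp_ge_quartic (y := x) hxpos.le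
      rw [← hE_def] at this; linarith
    have hd0 : 0 < d := by
      rw [hd_def]; exact mul_pos hxpos hM
    have hdN : 0 < d - N := by
      have h1 : d - N = 2 - t * (x ^ 2 + 2 * x + 2) := by
        rw [hd_def, hN_def]; ring
      rw [h1]
      -- 2E > x^2+2x+2 since E ≥ quartic; multiply by t
      have h2 : x ^ 2 + 2 * x + 2 < 2 * E := by nlinarith [hxpos, sq_nonneg x]
      nlinarith [mul_lt_mul_of_pos_left h2 ht0, hEt]
    have h1q : 0 < 1 - q x := by
      rw [hq]
      have : 1 - N / d = (d - N) / d := by field_simp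
      rw [this]
      exact div_pos hdN hd0
    rcases le_or_gt x (3/2) with hx32 | hx32
    · -- show rho x ≤ 3
      have key : 1 + q x ≤ 3 * (1 - q x) := by
        rw [hq]
        have e1 : 1 + N / d = (d + N) / d := by field_simp
        have e2 : 1 - N / d = (d - N) / d := by field_simp
        rw [e1, e2, ← sub_nonneg]
        have e3 : 3 * ((d - N) / d) - (d + N) / d = (3 * (d - N) - (d + N)) / d := by
          ring
        rw [e3]
        apply div_nonneg _ hd0.le
        -- goal : d + N ≤ 3 * (d - N), i.e. t*(2x^2+6x+8) ≤ 8-2x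
        have h2 : 3 * (d - N) - (d + N) = (8 - 2 * x) - t * (2 * x ^ 2 + 6 * x + 8) := by
          rw [hd_def, hN_def]; ring
        -- (8-2x)*T4 - (2x^2+6x+8) = x^3(4-x^2)/12 ≥ 0 for 0 ≤ x ≤ 2
        have hpoly : 2 * x ^ 2 + 6 * x + 8 ≤
            (8 - 2 * x) * (1 + x + x ^ 2 / 2 + x ^ 3 / 6 + x ^ 4 / 24) := by
          have hf : 0 ≤ x ^ 3 * (4 - x ^ 2) := by
            apply mul_nonneg (pow_nonneg hxpos.le 3); nlinarith
          nlinarith [hf]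
        have htT : t * (1 + x + x ^ 2 / 2 + x ^ 3 / 6 + x ^ 4 / 24) ≤ 1 := by
          nlinarith [mul_nonneg ht0.le (sub_nonneg.2 hT)]
        have h3 : t * (2 * x ^ 2 + 6 * x + 8) ≤
            t * ((8 - 2 * x) * (1 + x + x ^ 2 / 2 + x ^ 3 / 6 + x ^ 4 / 24)) :=
          mul_le_mul_of_nonneg_left hpoly ht0.le
        nlinarith [htT, h3, hx32]
      have : rho x ≤ 3 := by
        rw [rho, div_le_iff₀ h1q]; linarith
      exact this.trans (le_max_left _ _)
    · -- x > 3/2 : show rho x ≤ 2x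
      have key : 1 + q x ≤ (2 * x) * (1 - q x) := by
        rw [hq]
        have e1 : 1 + N / d = (d + N) / d := by field_simp
        have e2 : 1 - N / d = (d - N) / d := by field_simp
        rw [e1, e2, ← sub_nonneg]
        have e3 : (2 * x) * ((d - N) / d) - (d + N) / d = ((2 * x) * (d - N) - (d + N)) / d := by
          ring
        rw [e3]
        apply div_nonneg _ hd0.le
        have h2 : (2 * x) * (d - N) - (d + N) =
            (2 * x + 2) - t * (2 * x ^ 3 + 3 * x ^ 2 + 4 * x + 2) := by
          rw [hd_def, hN_def]; ring
        -- (2x+2)*T4 - (2x^3+3x^2+4x+2) = x^3(x^2+5x-8)/12 ≥ 0 for x ≥ 3/2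
        have hpoly : 2 * x ^ 3 + 3 * x ^ 2 + 4 * x + 2 ≤
            (2 * x + 2) * (1 + x + x ^ 2 / 2 + x ^ 3 / 6 + x ^ 4 / 24) := by
          have hf : 0 ≤ x ^ 3 * (x ^ 2 + 5 * x - 8) := by
            apply mul_nonneg (pow_nonneg hxpos.le 3); nlinarith
          nlinarith [hf]
        have htT : t * (1 + x + x ^ 2 / 2 + x ^ 3 / 6 + x ^ 4 / 24) ≤ 1 := by
          nlinarith [mul_nonneg ht0.le (sub_nonneg.2 hT)]
        have h3 : t * (2 * x ^ 3 + 3 * x ^ 2 + 4 * x + 2) ≤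
            t * ((2 * x + 2) * (1 + x + x ^ 2 / 2 + x ^ 3 / 6 + x ^ 4 / 24)) :=
          mul_le_mul_of_nonneg_left hpoly ht0.le
        nlinarith [htT, h3, hx32]
      have : rho x ≤ 2 * x := by
        rw [rho, div_le_iff₀ h1q]; linarith
      exact this.trans (le_max_right _ _)
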